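/- In the GLP random graph process, for each vertex j and each integer t_0 ≥ j, the sequence of random variables Z_t := d_t(j)·1_{{T_{j,1} = t_0}} / ∏_{s=1}^{t−1}(1 + c_p/s), for t ≥ t_0, is a martingale with respect to the filtration (F_t). -/

import Mathlib

open MeasureTheory ProbabilityTheory Filter Finset
open scoped ENNReal

/-- The two kinds of stochastic operations in the GLP process: a vertex-step attaching the
new vertex to `u`, or an edge-step adding an edge between the (ordered) pair `u`, `v`. -/
inductive GLPStep where
  | vertex (u : ℕ) : GLPStep
  | edge (u v : ℕ) : GLPStep
  deriving DecidableEq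

/-- The GLP (generalized linear preferential) random graph process with parameter `p`:
at each step, with probability `p` a vertex-step is performed and with probability `1 - p`
an edge-step is performed, connections being chosen proportionally to degrees.
`n t` is the number of vertices of `G t`, `d t j` is the degree of the `j`-th vertex in
`G t` (zero if not yet present, loops counting twice), `Ecount t u v` is the number of
edges between `u` and `v` in `G t`, and `step t` is the random operation performed to
obtain `G (t+1)` from `G t`. -/
structure GLPProcess (p : ℝ) where
  Ω : Type
  mΩ : MeasurableSpace Ω
  μ : MeasureTheory.Measure Ω
  isProb : MeasureTheory.IsProbabilityMeasure μ
  F : MeasureTheory.Filtration ℕ mΩ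
  n : ℕ → Ω → ℕ
  d : ℕ → ℕ → Ω → ℕ
  Ecount : ℕ → ℕ → ℕ → Ω → ℕ
  step : ℕ → Ω → GLPStep
  /-- `G 1` consists of one vertex with one loop. -/
  n_one : ∀ ω, n 1 ω = 1
  d_one : ∀ ω j, d 1 j ω = if j = 1 then 2 else 0
  Ecount_one : ∀ ω u v, Ecount 1 u v ω = if u = 1 ∧ v = 1 then 1 else 0
  Ecount_symm : ∀ t u v ω, Ecount t u v ω = Ecount t v u ω
  /-- a vertex-step adds one vertex, an edge-step none. -/
  n_succ : ∀ t ω, 1 ≤ t → n (t + 1) ω =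
    (match step t ω with
      | .vertex _ => n t ω + 1
      | .edge _ _ => n t ω)
  /-- degree update: in a vertex-step the chosen vertex and the incoming vertex (labeled
  `n t ω + 1`) each gain one; in an edge-step each chosen endpoint gains one (so a loop
  adds two to its vertex). -/
  d_succ : ∀ t ω j, 1 ≤ t → d (t + 1) j ω =
    (match step t ω with
      | .vertex u => d t j ω + (if j = u then 1 else 0) + (if j = n t ω + 1 then 1 else 0)
      | .edge u v => d t j ω + (if j = u then 1 else 0) + (if j = v then 1 else 0))
  Ecount_succ : ∀ t ω u v, 1 ≤ t → Ecount (t + 1) u v ω =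
    (match step t ω with
      | .vertex w => Ecount t u v ω +
          (if (u = w ∧ v = n t ω + 1) ∨ (v = w ∧ u = n t ω + 1) then 1 else 0)
      | .edge w z => Ecount t u v ω +
          (if (u = w ∧ v = z) ∨ (u = z ∧ v = w) then 1 else 0))
  adapted_n : ∀ t, Measurable[F t] (n t)
  adapted_d : ∀ t j, Measurable[F t] (d t j)
  adapted_E : ∀ t u v, Measurable[F t] (Ecount t u v)
  step_meas_vertex : ∀ t u, MeasurableSet[F (t + 1)] {ω | step t ω = GLPStep.vertex u}
  step_meas_edge : ∀ t u v, MeasurableSet[F (t + 1)] {ω | step t ω = GLPStep.edge u v}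
  /-- conditional law of a vertex-step given `F t`: the new vertex attaches to `u` with
  probability `p * d t u / (2 t)`. -/
  law_vertex : ∀ t, 1 ≤ t → ∀ u : ℕ, ∀ A : Set Ω, MeasurableSet[F t] A →
    μ (A ∩ {ω | step t ω = GLPStep.vertex u}) =
      ∫⁻ ω in A, ENNReal.ofReal (p * (d t u ω : ℝ) / (2 * t)) ∂μ
  /-- conditional law of an edge-step given `F t`: the ordered pair `(u, v)` is chosen with
  probability `(1 - p) * d t u * d t v / (4 t ^ 2)`. -/
  law_edge : ∀ t, 1 ≤ t → ∀ u v : ℕ, ∀ A : Set Ω, MeasurableSet[F t] A →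
    μ (A ∩ {ω | step t ω = GLPStep.edge u v}) =
      ∫⁻ ω in A, ENNReal.ofReal ((1 - p) * (d t u ω : ℝ) * (d t v ω : ℝ) / (4 * t ^ 2)) ∂μ

/-- `T j`: the random time at which the `j`-th vertex is added to the graph. -/
noncomputable def GLPProcess.T {p : ℝ} (P : GLPProcess p) (j : ℕ) (ω : P.Ω) : ℕ :=
  sInf {t : ℕ | 1 ≤ t ∧ j ≤ P.n t ω}

/-- `d_{t,m}(j)`: the total degree at time `t` of the `j`-th block of `m` consecutive
vertices. -/
def GLPProcess.blockDeg {p : ℝ} (P : GLPProcess p) (m t j : ℕ) (ω : P.Ω) : ℕ :=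
  ∑ i ∈ Finset.Icc ((j - 1) * m + 1) (j * m), P.d t i ω

/-- `T^{(m)}_{j,k}`: the first time the `j`-th block of `m` vertices has total degree at
least `k` (`⊤` if this never happens). -/
noncomputable def GLPProcess.blockTime {p : ℝ} (P : GLPProcess p) (m j k : ℕ) (ω : P.Ω) : ℕ∞ :=
  sInf {x : ℕ∞ | ∃ t : ℕ, x = (t : ℕ∞) ∧ 1 ≤ t ∧ k ≤ P.blockDeg m t j ω}

namespace GLPProcess

variable {p : ℝ} (P : GLPProcess p)

lemma d_succ_vertex {t : ℕ} {ω : P.Ω} {u : ℕ} (ht : 1 ≤ t) (h : P.step t ω = GLPStep.vertex u)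
    (j : ℕ) : P.d (t + 1) j ω
      = P.d t j ω + (if j = u then 1 else 0) + (if j = P.n t ω + 1 then 1 else 0) := by
  rw [P.d_succ t ω j ht, h]

lemma d_succ_edge {t : ℕ} {ω : P.Ω} {u v : ℕ} (ht : 1 ≤ t) (h : P.step t ω = GLPStep.edge u v)
    (j : ℕ) : P.d (t + 1) j ω
      = P.d t j ω + (if j = u then 1 else 0) + (if j = v then 1 else 0) := by
  rw [P.d_succ t ω j ht, h]

lemma n_mono (ω : P.Ω) {a b : ℕ} (ha : 1 ≤ a) (hab : a ≤ b) : P.n a ω ≤ P.n b ω := by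
  induction b, hab using Nat.le_induction with
  | base => exact le_refl _
  | succ b hb ih =>
    refine ih.trans ?_
    cases h : P.step b ω with
    | vertex u =>
      have : P.n (b + 1) ω = P.n b ω + 1 := by rw [P.n_succ b ω (ha.trans hb), h]
      omega
    | edge u v =>
      have : P.n (b + 1) ω = P.n b ω := by rw [P.n_succ b ω (ha.trans hb), h]
      omega

lemma d_le (ω : P.Ω) (j : ℕ) : ∀ t, 1 ≤ t → P.d t j ω ≤ 2 * t := by
  intro t ht
  induction t, ht using Nat.le_induction with
  | base => rw [P.d_one]; split <;> omega
  | succ t ht ih =>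
    cases h : P.step t ω with
    | vertex u => have := P.d_succ_vertex ht h j; split_ifs at this <;> omega
    | edge u v => have := P.d_succ_edge ht h j; split_ifs at this <;> omega

lemma tsum_d (ω : P.Ω) : ∀ t, 1 ≤ t → ∑' v, (P.d t v ω : ℝ≥0∞) = 2 * t := by
  intro t ht
  induction t, ht using Nat.le_induction with
  | base =>
    have : ∀ v, (P.d 1 v ω : ℝ≥0∞) = if v = 1 then 2 else 0 := by
      intro v; rw [P.d_one]; split <;> simp
    rw [tsum_congr this, tsum_ite_eq]
    norm_num
  | succ t ht ih =>
    cases h : P.step t ω with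
    | vertex u =>
      have hc : ∀ v, (P.d (t + 1) v ω : ℝ≥0∞) =
          (P.d t v ω : ℝ≥0∞) + ((if v = u then 1 else 0) + (if v = P.n t ω + 1 then 1 else 0)) := by
        intro v; rw [P.d_succ_vertex ht h v]; push_cast; split_ifs <;> ring
      rw [tsum_congr hc, ENNReal.tsum_add, ENNReal.tsum_add, tsum_ite_eq, tsum_ite_eq, ih]
      push_cast; ring
    | edge u w =>
      have hc : ∀ v, (P.d (t + 1) v ω : ℝ≥0∞) =
          (P.d t v ω : ℝ≥0∞) + ((if v = u then 1 else 0) + (if v = w then 1 else 0)) := by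
        intro v; rw [P.d_succ_edge ht h v]; push_cast; split_ifs <;> ring
      rw [tsum_congr hc, ENNReal.tsum_add, ENNReal.tsum_add, tsum_ite_eq, tsum_ite_eq, ih]
      push_cast; ring

lemma T_eq_iff (ω : P.Ω) {j t₀ : ℕ} (ht₀ : 1 ≤ t₀) :
    P.T j ω = t₀ ↔ (j ≤ P.n t₀ ω ∧ ∀ s, 1 ≤ s → s < t₀ → P.n s ω < j) := by
  unfold GLPProcess.T
  set S : Set ℕ := {t : ℕ | 1 ≤ t ∧ j ≤ P.n t ω} with hS
  constructor
  · intro h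
    have hne : S.Nonempty := by
      by_contra hcon
      rw [Set.not_nonempty_iff_eq_empty] at hcon
      rw [hcon, Nat.sInf_empty] at h; omega
    have hmem := Nat.sInf_mem hne
    rw [h] at hmem
    refine ⟨hmem.2, fun s hs1 hs2 => ?_⟩
    by_contra hcon
    push_neg at hcon
    have : s ∈ S := ⟨hs1, hcon⟩
    have := Nat.sInf_le this
    omega
  · rintro ⟨h1, h2⟩
    have hmem : t₀ ∈ S := ⟨ht₀, h1⟩
    refine le_antisymm (Nat.sInf_le hmem) ?_
    by_contra hcon
    push_neg at hcon
    have hne : S.Nonempty := ⟨t₀, hmem⟩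
    obtain ⟨h1', h2'⟩ := Nat.sInf_mem hne
    have := h2 _ h1' hcon
    omega

lemma j_le_n (ω : P.Ω) {j t₀ t : ℕ} (hT : P.T j ω = t₀) (ht₀ : 1 ≤ t₀) (ht : t₀ ≤ t) :
    j ≤ P.n t ω := by
  have := ((P.T_eq_iff ω ht₀).mp hT).1
  exact this.trans (P.n_mono ω ht₀ ht)

lemma T_measurableSet {j t₀ : ℕ} (ht₀ : 1 ≤ t₀) :
    MeasurableSet[P.F t₀] {ω | P.T j ω = t₀} := by
  have hset : {ω | P.T j ω = t₀} =
      ({ω | j ≤ P.n t₀ ω} ∩ ⋂ (s : ℕ) (_ : 1 ≤ s) (_ : s < t₀), {ω | P.n s ω < j}) := by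
    ext ω
    simp only [Set.mem_setOf_eq, Set.mem_inter_iff, Set.mem_iInter, P.T_eq_iff ω ht₀]
  rw [hset]
  refine MeasurableSet.inter ?_ ?_
  · exact P.adapted_n t₀ (MeasurableSet.of_discrete (s := Set.Ici j))
  · refine MeasurableSet.iInter fun s => MeasurableSet.iInter fun hs1 =>
      MeasurableSet.iInter fun hs2 => ?_
    exact P.F.mono hs2.le _ (P.adapted_n s (MeasurableSet.of_discrete (s := Set.Iio j)))

end GLPProcess
namespace GLPProcess

variable {p : ℝ} (P : GLPProcess p)

lemma meas_d (t i : ℕ) : Measurable[P.mΩ] (P.d t i) :=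
  (P.adapted_d t i).mono (P.F.le t) le_rfl

lemma meas_d_enn (t i : ℕ) : Measurable[P.mΩ] fun ω => (P.d t i ω : ℝ≥0∞) := by
  exact measurable_from_top.comp (P.meas_d t i)

lemma meas_d_real (t i : ℕ) : Measurable[P.mΩ] fun ω => (P.d t i ω : ℝ) := by
  exact measurable_from_top.comp (P.meas_d t i)

lemma key (hp : p ∈ Set.Ioo (0 : ℝ) 1) {j t : ℕ} (hj : 1 ≤ j) (ht : 1 ≤ t)
    {B : Set P.Ω} (hB : MeasurableSet[P.F t] B) (hsub : ∀ ω ∈ B, j ≤ P.n t ω) :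
    ∫⁻ ω in B, (P.d (t + 1) j ω : ℝ≥0∞) ∂P.μ
      = ENNReal.ofReal (1 + (1 - p / 2) / t) * ∫⁻ ω in B, (P.d t j ω : ℝ≥0∞) ∂P.μ := by
  letI : MeasurableSpace P.Ω := P.mΩ
  have hm : ∀ s, P.F s ≤ P.mΩ := fun s => P.F.le s
  have hBm : MeasurableSet B := hm t B hB
  set V : Set P.Ω := {ω | P.step t ω = GLPStep.vertex j} with hV
  set Eg : ℕ → ℕ → Set P.Ω := fun u v => {ω | P.step t ω = GLPStep.edge u v} with hEg
  have hVm : MeasurableSet V := hm (t + 1) _ (P.step_meas_vertex t j)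
  have hEgm : ∀ u v, MeasurableSet (Eg u v) := fun u v => hm (t + 1) _ (P.step_meas_edge t u v)
  have htR : (0 : ℝ) < t := by exact_mod_cast ht
  have hp0 : 0 < p := hp.1
  have hp1 : p < 1 := hp.2
  -- pointwise decomposition on B
  have hpt : ∀ ω ∈ B, (P.d (t + 1) j ω : ℝ≥0∞) =
      (P.d t j ω : ℝ≥0∞) + (V.indicator 1 ω +
        ((∑' v, (Eg j v).indicator 1 ω) + (∑' u, (Eg u j).indicator 1 ω))) := by
    intro ω hω
    have hn : j ≠ P.n t ω + 1 := by have := hsub ω hω; omega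
    cases h : P.step t ω with
    | vertex u =>
      have hd := P.d_succ_vertex ht h j
      rw [if_neg hn] at hd
      have hVi : V.indicator (1 : P.Ω → ℝ≥0∞) ω = if j = u then 1 else 0 := by
        simp only [hV, Set.indicator_apply, Set.mem_setOf_eq, h]
        by_cases hju : j = u
        · simp [hju]
        · rw [if_neg, if_neg hju]; simp [GLPStep.vertex.injEq]; omega
      have hE1 : ∀ v, (Eg j v).indicator (1 : P.Ω → ℝ≥0∞) ω = 0 := by
        intro v; simp [hEg, Set.indicator_apply, h]
      have hE2 : ∀ u', (Eg u' j).indicator (1 : P.Ω → ℝ≥0∞) ω = 0 := by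
        intro u'; simp [hEg, Set.indicator_apply, h]
      rw [hd, hVi, tsum_congr hE1, tsum_congr hE2]
      push_cast
      split_ifs <;> simp
    | edge u v =>
      have hd := P.d_succ_edge ht h j
      have hVi : V.indicator (1 : P.Ω → ℝ≥0∞) ω = 0 := by
        simp [hV, Set.indicator_apply, h]
      have hE1 : ∀ w, (Eg j w).indicator (1 : P.Ω → ℝ≥0∞) ω
          = if w = v then (if j = u then 1 else 0) else 0 := by
        intro w
        simp only [hEg, Set.indicator_apply, Set.mem_setOf_eq, h, GLPStep.edge.injEq]
        by_cases h1 : w = v <;> by_cases h2 : j = u <;> simp_all [eq_comm]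
      have hE2 : ∀ w, (Eg w j).indicator (1 : P.Ω → ℝ≥0∞) ω
          = if w = u then (if j = v then 1 else 0) else 0 := by
        intro w
        simp only [hEg, Set.indicator_apply, Set.mem_setOf_eq, h, GLPStep.edge.injEq]
        by_cases h1 : w = u <;> by_cases h2 : j = v <;> simp_all [eq_comm]
      rw [hd, hVi, tsum_congr hE1, tsum_congr hE2, tsum_ite_eq, tsum_ite_eq]
      push_cast
      split_ifs <;> simp <;> ring
  -- measurability of the pieces
  have hd1 : Measurable fun ω => (P.d t j ω : ℝ≥0∞) := P.meas_d_enn t j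
  have hdV : Measurable (V.indicator (1 : P.Ω → ℝ≥0∞)) := measurable_one.indicator hVm
  have hS1m : Measurable fun ω => ∑' v, (Eg j v).indicator (1 : P.Ω → ℝ≥0∞) ω :=
    Measurable.ennreal_tsum fun v => measurable_one.indicator (hEgm j v)
  have hS2m : Measurable fun ω => ∑' u, (Eg u j).indicator (1 : P.Ω → ℝ≥0∞) ω :=
    Measurable.ennreal_tsum fun u => measurable_one.indicator (hEgm u j)
  have hlawm : ∀ u v : ℕ, Measurable fun ω =>
      ENNReal.ofReal ((1 - p) * (P.d t u ω : ℝ) * (P.d t v ω : ℝ) / (4 * (t : ℝ) ^ 2)) :=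
    fun u v => ((((P.meas_d_real t u).const_mul (1 - p)).mul (P.meas_d_real t v)).div_const
      (4 * (t : ℝ) ^ 2)).ennreal_ofReal
  -- split the integral
  rw [setLIntegral_congr_fun hBm hpt,
    lintegral_add_left hd1, lintegral_add_left hdV, lintegral_add_left hS1m]
  -- vertex term
  have eV : ∫⁻ ω in B, V.indicator 1 ω ∂P.μ
      = ∫⁻ ω in B, ENNReal.ofReal (p * (P.d t j ω : ℝ) / (2 * t)) ∂P.μ := by
    rw [lintegral_indicator_one hVm, Measure.restrict_apply hVm, Set.inter_comm]
    exact P.law_vertex t ht j B hB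
  -- edge terms
  have factor : ∀ C : P.Ω → ℕ, (∀ ω, C ω = P.d t j ω) → ∀ ω : P.Ω, ∀ v : ℕ,
      ENNReal.ofReal ((1 - p) * (C ω : ℝ) * (P.d t v ω : ℝ) / (4 * (t : ℝ) ^ 2))
        = ENNReal.ofReal ((1 - p) * (P.d t j ω : ℝ) / (4 * (t : ℝ) ^ 2)) * (P.d t v ω : ℝ≥0∞) := by
    intro C hC ω v
    rw [hC, ← ENNReal.ofReal_natCast (P.d t v ω), ← ENNReal.ofReal_mul
      (div_nonneg (mul_nonneg (by linarith) (Nat.cast_nonneg _)) (by positivity))]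
    congr 1
    ring
  have eE1 : ∫⁻ ω in B, (∑' v, (Eg j v).indicator 1 ω) ∂P.μ
      = ∫⁻ ω in B, ENNReal.ofReal ((1 - p) * (P.d t j ω : ℝ) / (4 * (t : ℝ) ^ 2))
          * (2 * (t : ℝ≥0∞)) ∂P.μ := by
    rw [lintegral_tsum fun v => (measurable_one.indicator (hEgm j v)).aemeasurable]
    have e1 : ∀ v : ℕ, ∫⁻ ω in B, (Eg j v).indicator 1 ω ∂P.μ
        = ∫⁻ ω in B,
            ENNReal.ofReal ((1 - p) * (P.d t j ω : ℝ) * (P.d t v ω : ℝ) / (4 * (t : ℝ) ^ 2)) ∂P.μ := by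
      intro v
      rw [lintegral_indicator_one (hEgm j v), Measure.restrict_apply (hEgm j v), Set.inter_comm]
      exact P.law_edge t ht j v B hB
    rw [tsum_congr e1, ← lintegral_tsum fun v => ((hlawm j v).aemeasurable)]
    refine lintegral_congr fun ω => ?_
    rw [tsum_congr (fun v => factor (P.d t j) (fun _ => rfl) ω v), ENNReal.tsum_mul_left,
      P.tsum_d ω t ht]
  have eE2 : ∫⁻ ω in B, (∑' u, (Eg u j).indicator 1 ω) ∂P.μ
      = ∫⁻ ω in B, ENNReal.ofReal ((1 - p) * (P.d t j ω : ℝ) / (4 * (t : ℝ) ^ 2))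
          * (2 * (t : ℝ≥0∞)) ∂P.μ := by
    rw [lintegral_tsum fun u => (measurable_one.indicator (hEgm u j)).aemeasurable]
    have e1 : ∀ u : ℕ, ∫⁻ ω in B, (Eg u j).indicator 1 ω ∂P.μ
        = ∫⁻ ω in B,
            ENNReal.ofReal ((1 - p) * (P.d t u ω : ℝ) * (P.d t j ω : ℝ) / (4 * (t : ℝ) ^ 2)) ∂P.μ := by
      intro u
      rw [lintegral_indicator_one (hEgm u j), Measure.restrict_apply (hEgm u j), Set.inter_comm]
      exact P.law_edge t ht u j B hB
    rw [tsum_congr e1, ← lintegral_tsum fun u => ((hlawm u j).aemeasurable)]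
    refine lintegral_congr fun ω => ?_
    have hsw : ∀ u : ℕ,
        ENNReal.ofReal ((1 - p) * (P.d t u ω : ℝ) * (P.d t j ω : ℝ) / (4 * (t : ℝ) ^ 2))
          = ENNReal.ofReal ((1 - p) * (P.d t j ω : ℝ) / (4 * (t : ℝ) ^ 2)) * (P.d t u ω : ℝ≥0∞) := by
      intro u
      rw [← ENNReal.ofReal_natCast (P.d t u ω), ← ENNReal.ofReal_mul
        (div_nonneg (mul_nonneg (by linarith) (Nat.cast_nonneg _)) (by positivity))]
      congr 1
      ring
    rw [tsum_congr hsw, ENNReal.tsum_mul_left, P.tsum_d ω t ht]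
  rw [eV, eE1, eE2]
  -- merge back into a single integral and conclude pointwise
  have hf1 : Measurable fun ω => ENNReal.ofReal (p * (P.d t j ω : ℝ) / (2 * (t : ℝ))) :=
    (((P.meas_d_real t j).const_mul p).div_const (2 * (t : ℝ))).ennreal_ofReal
  have hf2 : Measurable fun ω =>
      ENNReal.ofReal ((1 - p) * (P.d t j ω : ℝ) / (4 * (t : ℝ) ^ 2)) * (2 * (t : ℝ≥0∞)) :=
    ((((P.meas_d_real t j).const_mul (1 - p)).div_const (4 * (t : ℝ) ^ 2)).ennreal_ofReal).mul_const _
  rw [← lintegral_add_left hf2, ← lintegral_add_left hf1, ← lintegral_add_left hd1,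
    ← lintegral_const_mul _ hd1]
  refine lintegral_congr fun ω => ?_
  set x : ℝ := (P.d t j ω : ℝ) with hxdef
  have hx : 0 ≤ x := Nat.cast_nonneg _
  have h2t : (2 * (t : ℝ≥0∞)) = ENNReal.ofReal (2 * (t : ℝ)) := by
    rw [ENNReal.ofReal_mul (by norm_num), ENNReal.ofReal_natCast, ENNReal.ofReal_ofNat]
  have hxe : ((P.d t j ω : ℕ) : ℝ≥0∞) = ENNReal.ofReal x := (ENNReal.ofReal_natCast _).symm
  have e0 : (0:ℝ) ≤ (1 - p) * x / (4 * (t : ℝ) ^ 2) :=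
    div_nonneg (mul_nonneg (by linarith) hx) (by positivity)
  have e1 : (0:ℝ) ≤ (1 - p) * x / (4 * (t : ℝ) ^ 2) * (2 * (t : ℝ)) :=
    mul_nonneg e0 (by positivity)
  have e2 : (0:ℝ) ≤ p * x / (2 * (t : ℝ)) := div_nonneg (mul_nonneg hp0.le hx) (by positivity)
  have e3 : (0:ℝ) ≤ 1 + (1 - p / 2) / (t : ℝ) := by
    have : (0:ℝ) ≤ (1 - p / 2) / (t : ℝ) := div_nonneg (by linarith) htR.le
    linarith
  rw [hxe, h2t, ← ENNReal.ofReal_mul e0, ← ENNReal.ofReal_add e1 e1,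
    ← ENNReal.ofReal_add e2 (by linarith), ← ENNReal.ofReal_add hx (by linarith),
    ← ENNReal.ofReal_mul e3]
  congr 1
  field_simp
  ring

end GLPProcess
namespace GLPProcess

variable {p : ℝ} (P : GLPProcess p)

/-- The lintegral of `ofReal (d * indicator)` over an `F t`-measurable set. -/
lemma key_real (hp : p ∈ Set.Ioo (0 : ℝ) 1) {j t₀ t : ℕ} (hj : 1 ≤ j) (ht₀ : j ≤ t₀)
    (ht : t₀ ≤ t) {A : Set P.Ω} (hA : MeasurableSet[P.F t] A) :
    ∫ ω in A, ((P.d (t + 1) j ω : ℝ) * (if P.T j ω = t₀ then 1 else 0)) ∂P.μ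
      = (1 + (1 - p / 2) / t) * ∫ ω in A, ((P.d t j ω : ℝ) * (if P.T j ω = t₀ then 1 else 0)) ∂P.μ := by
  letI : MeasurableSpace P.Ω := P.mΩ
  haveI : IsProbabilityMeasure P.μ := P.isProb
  have hm : ∀ s, P.F s ≤ P.mΩ := fun s => P.F.le s
  have ht1 : 1 ≤ t := le_trans (le_trans hj ht₀) ht
  have htR : (0 : ℝ) < t := by exact_mod_cast ht1
  set E : Set P.Ω := {ω | P.T j ω = t₀} with hE
  have hEt : MeasurableSet[P.F t] E := P.F.mono ht _ (P.T_measurableSet (le_trans hj ht₀))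
  have hB : MeasurableSet[P.F t] (A ∩ E) := hA.inter hEt
  have hBm : MeasurableSet (A ∩ E) := hm t _ hB
  have hAm : MeasurableSet A := hm t _ hA
  have hEm : MeasurableSet E := hm t _ hEt
  have hsub : ∀ ω ∈ A ∩ E, j ≤ P.n t ω := fun ω hω =>
    P.j_le_n ω hω.2 (le_trans hj ht₀) ht
  -- nonneg / measurable facts
  have hnn : ∀ s : ℕ, (0 : P.Ω → ℝ) ≤ᵐ[P.μ.restrict A]
      fun ω => (P.d s j ω : ℝ) * (if P.T j ω = t₀ then 1 else 0) := by
    intro s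
    refine Filter.Eventually.of_forall fun ω => ?_
    positivity
  have hsm : ∀ s : ℕ, AEStronglyMeasurable
      (fun ω => (P.d s j ω : ℝ) * (if P.T j ω = t₀ then 1 else 0)) (P.μ.restrict A) := by
    intro s
    refine (((P.meas_d_real s j).mul ?_).stronglyMeasurable).aestronglyMeasurable
    exact Measurable.ite hEm measurable_const measurable_const
  -- rewrite the Bochner integrals as lintegrals
  have hofReal : ∀ s : ℕ, ∀ ω : P.Ω,
      ENNReal.ofReal ((P.d s j ω : ℝ) * (if P.T j ω = t₀ then 1 else 0))
        = E.indicator (fun ω => (P.d s j ω : ℝ≥0∞)) ω := by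
    intro s ω
    by_cases hω : ω ∈ E
    · have : P.T j ω = t₀ := hω
      simp [Set.indicator_apply, hω, this, ENNReal.ofReal_natCast]
    · have : ¬ P.T j ω = t₀ := hω
      simp [Set.indicator_apply, hω, this]
  have hlin : ∀ s : ℕ, ∫ ω in A, ((P.d s j ω : ℝ) * (if P.T j ω = t₀ then 1 else 0)) ∂P.μ
      = (∫⁻ ω in A ∩ E, (P.d s j ω : ℝ≥0∞) ∂P.μ).toReal := by
    intro s
    rw [integral_eq_lintegral_of_nonneg_ae (hnn s) (hsm s)]
    congr 1
    rw [lintegral_congr fun ω => hofReal s ω, lintegral_indicator hEm _,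
      Measure.restrict_restrict hEm, Set.inter_comm]
  have hfin : ∫⁻ ω in A ∩ E, (P.d t j ω : ℝ≥0∞) ∂P.μ ≠ ⊤ := by
    have hb : ∫⁻ ω in A ∩ E, (P.d t j ω : ℝ≥0∞) ∂P.μ ≤ ((2 * t : ℕ) : ℝ≥0∞) * P.μ (A ∩ E) := by
      rw [← setLIntegral_const]
      exact lintegral_mono fun ω => Nat.cast_le.mpr (P.d_le ω j t ht1)
    exact ne_of_lt (lt_of_le_of_lt hb
      (ENNReal.mul_lt_top (ENNReal.natCast_lt_top _) (measure_lt_top _ _)))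
  have e3 : (0:ℝ) ≤ 1 + (1 - p / 2) / (t : ℝ) := by
    have : (0:ℝ) ≤ (1 - p / 2) / (t : ℝ) := div_nonneg (by linarith [hp.2]) htR.le
    linarith
  rw [hlin (t + 1), hlin t, P.key hp hj ht1 hB hsub, ENNReal.toReal_mul,
    ENNReal.toReal_ofReal e3]

end GLPProcess
noncomputable def glpProd (p : ℝ) (t : ℕ) : ℝ :=
  ∏ s ∈ Finset.Icc 1 (t - 1), (1 + (1 - p / 2) / (s : ℝ))

lemma glpProd_factor_pos {p : ℝ} (hp : p < 2) {s : ℕ} (hs : 1 ≤ s) :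
    0 < 1 + (1 - p / 2) / (s : ℝ) := by
  have hs' : (0:ℝ) < s := by exact_mod_cast hs
  have : (0:ℝ) ≤ (1 - p / 2) / s := div_nonneg (by linarith) hs'.le
  linarith

lemma glpProd_pos {p : ℝ} (hp : p < 2) (t : ℕ) : 0 < glpProd p t := by
  refine Finset.prod_pos fun s hs => ?_
  exact glpProd_factor_pos hp (Finset.mem_Icc.mp hs).1

lemma glpProd_ge_one {p : ℝ} (hp : p ≤ 2) (t : ℕ) : 1 ≤ glpProd p t := by
  have h := Finset.prod_le_prod (f := fun _ : ℕ => (1:ℝ))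
    (g := fun s : ℕ => 1 + (1 - p / 2) / (s : ℝ)) (s := Finset.Icc 1 (t - 1))
    (fun i _ => zero_le_one) (fun i hi => ?_)
  · simpa [glpProd] using h
  · have hs1 : 1 ≤ i := (Finset.mem_Icc.mp hi).1
    have hs' : (0:ℝ) < i := by exact_mod_cast hs1
    have : (0:ℝ) ≤ (1 - p / 2) / i := div_nonneg (by linarith) hs'.le
    linarith

lemma glpProd_succ {p : ℝ} {t : ℕ} (ht : 1 ≤ t) :
    glpProd p (t + 1) = glpProd p t * (1 + (1 - p / 2) / (t : ℝ)) := by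
  obtain ⟨k, rfl⟩ : ∃ k, t = k + 1 := ⟨t - 1, by omega⟩
  unfold glpProd
  rw [show k + 1 + 1 - 1 = (k + 1 - 1) + 1 by omega,
    Finset.prod_Icc_succ_top (by omega)]
  norm_num

namespace GLPProcess

variable {p : ℝ} (P : GLPProcess p)

lemma Z_sm (hp : p ∈ Set.Ioo (0 : ℝ) 1) {j t₀ t : ℕ} (hj : 1 ≤ j) (ht₀ : j ≤ t₀)
    (ht : t₀ ≤ t) :
    StronglyMeasurable[P.F t] fun ω =>
      ((P.d t j ω : ℝ) * (if P.T j ω = t₀ then 1 else 0)) / glpProd p t := by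
  have hEt : MeasurableSet[P.F t] {ω | P.T j ω = t₀} :=
    P.F.mono ht _ (P.T_measurableSet (le_trans hj ht₀))
  refine Measurable.stronglyMeasurable ?_
  refine Measurable.div_const (Measurable.mul ?_ ?_) _
  · exact measurable_from_top.comp (P.adapted_d t j)
  · exact Measurable.ite hEt measurable_const measurable_const

lemma Z_int (hp : p ∈ Set.Ioo (0 : ℝ) 1) {j t₀ t : ℕ} (hj : 1 ≤ j) (ht₀ : j ≤ t₀)
    (ht : t₀ ≤ t) :
    Integrable (fun ω =>
      ((P.d t j ω : ℝ) * (if P.T j ω = t₀ then 1 else 0)) / glpProd p t) P.μ := by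
  letI : MeasurableSpace P.Ω := P.mΩ
  haveI : IsProbabilityMeasure P.μ := P.isProb
  have ht1 : 1 ≤ t := le_trans (le_trans hj ht₀) ht
  have hsm := ((P.Z_sm hp hj ht₀ ht).mono (P.F.le t)).aestronglyMeasurable (μ := P.μ)
  refine Integrable.mono' (integrable_const ((2 * t : ℕ) : ℝ)) hsm ?_
  refine Filter.Eventually.of_forall fun ω => ?_
  have hd := P.d_le ω j t ht1
  have hπ := glpProd_ge_one (by linarith [hp.2]) t
  have hπ0 : 0 < glpProd p t := glpProd_pos (by linarith [hp.2]) t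
  have h1 : |((P.d t j ω : ℝ) * (if P.T j ω = t₀ then 1 else 0)) / glpProd p t|
      = ((P.d t j ω : ℝ) * (if P.T j ω = t₀ then 1 else 0)) / glpProd p t := by
    rw [abs_of_nonneg]
    positivity
  rw [Real.norm_eq_abs, h1]
  have h2 : ((P.d t j ω : ℝ) * (if P.T j ω = t₀ then 1 else 0)) ≤ ((2 * t : ℕ) : ℝ) := by
    split_ifs
    · simpa using (by exact_mod_cast hd : (P.d t j ω : ℝ) ≤ ((2 * t : ℕ) : ℝ))
    · simp only [mul_zero]; positivity
  calc ((P.d t j ω : ℝ) * (if P.T j ω = t₀ then 1 else 0)) / glpProd p t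
      ≤ ((P.d t j ω : ℝ) * (if P.T j ω = t₀ then 1 else 0)) / 1 := by
        apply div_le_div_of_nonneg_left ?_ ?_ hπ <;> positivity
    _ ≤ ((2 * t : ℕ) : ℝ) := by rw [div_one]; exact h2

lemma Z_condexp_succ (hp : p ∈ Set.Ioo (0 : ℝ) 1) {j t₀ t : ℕ} (hj : 1 ≤ j) (ht₀ : j ≤ t₀)
    (ht : t₀ ≤ t) :
    MeasureTheory.condExp (P.F t) P.μ (fun ω =>
        ((P.d (t + 1) j ω : ℝ) * (if P.T j ω = t₀ then 1 else 0)) / glpProd p (t + 1))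
      =ᵐ[P.μ] fun ω =>
        ((P.d t j ω : ℝ) * (if P.T j ω = t₀ then 1 else 0)) / glpProd p t := by
  letI : MeasurableSpace P.Ω := P.mΩ
  haveI : IsProbabilityMeasure P.μ := P.isProb
  have ht1 : 1 ≤ t := le_trans (le_trans hj ht₀) ht
  have htR : (0 : ℝ) < t := by exact_mod_cast ht1
  have hfac : 0 < 1 + (1 - p / 2) / (t : ℝ) := glpProd_factor_pos (by linarith [hp.2]) ht1
  have hπ0 : 0 < glpProd p t := glpProd_pos (by linarith [hp.2]) t
  refine (ae_eq_condExp_of_forall_setIntegral_eq (P.F.le t)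
    (P.Z_int hp hj ht₀ (le_trans ht (Nat.le_succ t)))
    (fun s hs _ => ((P.Z_int hp hj ht₀ ht)).integrableOn)
    (fun s hs _ => ?_)
    ((P.Z_sm hp hj ht₀ ht).aestronglyMeasurable)).symm
  have h1 : glpProd p t ≠ 0 := ne_of_gt hπ0
  have h2 : 1 + (1 - p / 2) / (t : ℝ) ≠ 0 := ne_of_gt hfac
  rw [integral_div, integral_div, glpProd_succ ht1,
    P.key_real hp hj ht₀ ht hs, mul_comm (glpProd p t) (1 + (1 - p / 2) / (t : ℝ)),
    mul_div_mul_left _ _ h2]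

end GLPProcess
/-- For each vertex `j` and `t₀ ≥ j`, the process
`Z t = d_t(j) · 1_{T_{j,1} = t₀} / ∏_{s=1}^{t-1} (1 + c_p / s)`, `t ≥ t₀`, is a martingale
with respect to the filtration `F`: it is adapted and `E[Z t | F s] = Z s` a.s. for
`t₀ ≤ s ≤ t`. -/

theorem glp_degree_martingale (p : ℝ) (hp : p ∈ Set.Ioo (0 : ℝ) 1)
    (P : GLPProcess p) (j t₀ : ℕ) (hj : 1 ≤ j) (ht₀ : j ≤ t₀)
    (Z : ℕ → P.Ω → ℝ)
    (hZ : Z = fun t ω =>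
      ((P.d t j ω : ℝ) * (if P.T j ω = t₀ then 1 else 0)) /
        ∏ s ∈ Finset.Icc 1 (t - 1), (1 + (1 - p / 2) / (s : ℝ))) :
    (∀ t, t₀ ≤ t → StronglyMeasurable[P.F t] (Z t)) ∧
    (∀ s t, t₀ ≤ s → s ≤ t →
      MeasureTheory.condExp (P.F s) P.μ (Z t) =ᵐ[P.μ] Z s) := by
  letI : MeasurableSpace P.Ω := P.mΩ
  haveI : IsProbabilityMeasure P.μ := P.isProb
  have hZ' : ∀ t, Z t = fun ω =>
      ((P.d t j ω : ℝ) * (if P.T j ω = t₀ then 1 else 0)) / glpProd p t := by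
    intro t; rw [hZ]; rfl
  constructor
  · intro t ht
    rw [hZ' t]
    exact P.Z_sm hp hj ht₀ ht
  · intro s t hs hst
    induction t, hst using Nat.le_induction with
    | base =>
      rw [hZ' s, condExp_of_stronglyMeasurable (P.F.le s)
        (P.Z_sm hp hj ht₀ hs) (P.Z_int hp hj ht₀ hs)]
    | succ t hst ih =>
      have h1 : MeasureTheory.condExp (P.F s) P.μ (Z (t + 1)) =ᵐ[P.μ]
          MeasureTheory.condExp (P.F s) P.μ (MeasureTheory.condExp (P.F t) P.μ (Z (t + 1))) :=
        (condExp_condExp_of_le (P.F.mono hst) (P.F.le t)).symm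
      have hstep : MeasureTheory.condExp (P.F t) P.μ (Z (t + 1)) =ᵐ[P.μ] Z t := by
        rw [hZ' (t + 1), hZ' t]
        exact P.Z_condexp_succ hp hj ht₀ (le_trans hs hst)
      exact h1.trans ((condExp_congr_ae hstep).trans ih)
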